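/- arXiv:1903.06886 — 2 statements merged into one kernel-verified Lean document; each statement's English description precedes it below -/
import Mathlib

section
/- Let 0 < p, q < 1 and 0 ≤ φ_P, φ_S < 1, and suppose u, v satisfy u = (1-φ_S) + φ_S(1-p)(1-q)u + φ_S·p(1-q)v and v = (1-φ_P)(1-p)(1-q)u + (φ_P + (1-φ_P)p)(1-q)v. Then v = (1-φ_P) / ( q/((1-φ_S)(1-p)(1-q)) + 1 - φ_P - qφ_Pφ_S/(1-φ_S) ). -/
/-- Solution for v = P(Φ | generated in busy slot) from the recursive system in
the overlay scheme. -/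
theorem prob_success_busy_slot (p q φP φS u v : ℝ) (hp0 : 0 < p) (hp1 : p < 1)
    (hq0 : 0 < q) (hq1 : q < 1) (hφP0 : 0 ≤ φP) (hφP1 : φP < 1)
    (hφS0 : 0 ≤ φS) (hφS1 : φS < 1)
    (hu : u = (1 - φS) + φS * (1 - p) * (1 - q) * u + φS * p * (1 - q) * v)
    (hv : v = (1 - φP) * (1 - p) * (1 - q) * u + (φP + (1 - φP) * p) * (1 - q) * v) :
    v = (1 - φP) /
        (q / ((1 - φS) * (1 - p) * (1 - q)) + 1 - φP - q * φP * φS / (1 - φS)) := by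
  have hS : (0:ℝ) < 1 - φS := by linarith
  have hP : (0:ℝ) < 1 - φP := by linarith
  have hp : (0:ℝ) < 1 - p := by linarith
  have hq : (0:ℝ) < 1 - q := by linarith
  have hD : 0 < q + (1-p)*(1-q)*((1-φP)*(1-φS) - q*φP*φS) := by
    have h1 : (1-p)*(1-q)*(φP*φS) < 1 := by
      have hps : φP*φS < 1 := by nlinarith
      have hpq : (1-p)*(1-q) < 1 := by nlinarith
      nlinarith [mul_nonneg hφP0 hφS0, mul_pos hp hq]
    nlinarith [mul_pos (mul_pos hp hq) (mul_pos hP hS), mul_pos hq0 (sub_pos.mpr h1)]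
  have key : v * (q + (1-p)*(1-q)*((1-φP)*(1-φS) - q*φP*φS))
      = (1-φP)*(1-φS)*((1-p)*(1-q)) := by
    linear_combination ((1-φP)*(1-p)*(1-q)) * hu + (1 - φS*(1-p)*(1-q)) * hv
  have hden : q / ((1 - φS) * (1 - p) * (1 - q)) + 1 - φP - q * φP * φS / (1 - φS)
      = (q + (1-p)*(1-q)*((1-φP)*(1-φS) - q*φP*φS)) / ((1-φS)*(1-p)*(1-q)) := by
    field_simp
    ring
  rw [hden, div_div_eq_mul_div, eq_div_iff hD.ne']
  linear_combination key
end

section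
/- Let X, Y be independent exponential random variables with means Ω₁ and Ω₂ respectively, and let c, σ, N₀, P_p > 0. Then P( X < σ(c·min(Y, t) + N₀)/P_p ), where Y is truncated at t = I_C/P_s (i.e., the interference is min(P_s·Y, I_C)), equals 1 - [ exp(-I_C/(P_s Ω₂) - (I_C+N₀)σ/(P_p Ω₁)) + exp(-N₀σ/(P_p Ω₁))/(P_s Ω₂ σ / (P_p Ω₁)) ] / (1 + P_p Ω₁/(P_s Ω₂ σ)). -/
open MeasureTheory Real


lemma int_exp_interval (a t : ℝ) (ha : a ≠ 0) :
    ∫ y in (0:ℝ)..t, Real.exp (-(a*y)) = (1 - Real.exp (-(a*t)))/a := by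
  have key := intervalIntegral.integral_comp_mul_left (a := 0) (b := t)
      (fun x => Real.exp (-x)) ha
  rw [key]
  have key2 := intervalIntegral.integral_comp_neg (a := a*0) (b := a*t)
      (fun u => Real.exp u)
  rw [key2, integral_exp]
  simp only [smul_eq_mul, mul_zero, neg_zero, Real.exp_zero]
  field_simp

lemma int_exp_Ioi (a t : ℝ) (ha : 0 < a) :
    ∫ y in Set.Ioi t, Real.exp (-(a*y)) = Real.exp (-(a*t))/a := by
  have key := MeasureTheory.integral_comp_mul_left_Ioi (fun x => Real.exp (-x)) t ha
  rw [key, integral_exp_neg_Ioi]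
  simp [smul_eq_mul]
  ring


/-- The underlay outage probability of the primary link with capped
interference, expressed as the sum of two integrals (exponential channel gains
X ~ Exp(mean Ω₁), Y ~ Exp(mean Ω₂)), equals the closed form. -/
theorem underlay_primary_outage_with_interference
    (Ω₁ Ω₂ σ N₀ Pp Ps IC : ℝ) (hΩ₁ : 0 < Ω₁) (hΩ₂ : 0 < Ω₂) (hσ : 0 < σ)
    (hN₀ : 0 < N₀) (hPp : 0 < Pp) (hPs : 0 < Ps) (hIC : 0 < IC) :
    (∫ y in Set.Ioc 0 (IC / Ps),
        (Real.exp (-y / Ω₂) / Ω₂) * (1 - Real.exp (-(σ * (Ps * y + N₀)) / (Pp * Ω₁)))) +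
    (∫ y in Set.Ioi (IC / Ps),
        (Real.exp (-y / Ω₂) / Ω₂) * (1 - Real.exp (-(σ * (IC + N₀)) / (Pp * Ω₁))))
    = 1 - (Real.exp (-(IC / (Ps * Ω₂)) - (IC + N₀) * σ / (Pp * Ω₁))
          + Real.exp (-(N₀ * σ) / (Pp * Ω₁)) / (Ps * Ω₂ * σ / (Pp * Ω₁)))
        / (1 + Pp * Ω₁ / (Ps * Ω₂ * σ)) := by

  set t : ℝ := IC / Ps with ht
  set a : ℝ := Ω₂⁻¹ with ha
  set b : ℝ := σ * Ps / (Pp * Ω₁) with hb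
  set k : ℝ := σ * N₀ / (Pp * Ω₁) with hk
  have ha0 : 0 < a := inv_pos.mpr hΩ₂
  have hb0 : 0 < b := by positivity
  have ht0 : 0 < t := by positivity
  -- rewrite first integrand
  have hint1 : ∀ y : ℝ,
      (Real.exp (-y / Ω₂) / Ω₂) * (1 - Real.exp (-(σ * (Ps * y + N₀)) / (Pp * Ω₁)))
      = Ω₂⁻¹ * Real.exp (-(a*y)) - (Ω₂⁻¹ * Real.exp (-k)) * Real.exp (-((a+b)*y)) := by
    intro y
    have e1 : -y / Ω₂ = -(a*y) := by rw [ha]; ring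
    have e2 : -(σ * (Ps * y + N₀)) / (Pp * Ω₁) = -(b*y) + -k := by
      rw [hb, hk]; field_simp; ring
    rw [e1, e2, Real.exp_add]
    rw [show -((a+b)*y) = -(a*y) + -(b*y) by ring, Real.exp_add]
    ring
  -- first integral
  have hI1 : (∫ y in Set.Ioc 0 t,
        (Real.exp (-y / Ω₂) / Ω₂) * (1 - Real.exp (-(σ * (Ps * y + N₀)) / (Pp * Ω₁))))
      = Ω₂⁻¹ * ((1 - Real.exp (-(a*t)))/a)
        - (Ω₂⁻¹ * Real.exp (-k)) * ((1 - Real.exp (-((a+b)*t)))/(a+b)) := by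
    rw [← intervalIntegral.integral_of_le ht0.le]
    simp_rw [hint1]
    rw [intervalIntegral.integral_sub, intervalIntegral.integral_const_mul,
        intervalIntegral.integral_const_mul, int_exp_interval a t ha0.ne',
        int_exp_interval (a+b) t (by positivity)]
    · exact Continuous.intervalIntegrable (by continuity) 0 t
    · exact Continuous.intervalIntegrable (by continuity) 0 t
  -- second integral
  have hI2 : (∫ y in Set.Ioi t,
        (Real.exp (-y / Ω₂) / Ω₂) * (1 - Real.exp (-(σ * (IC + N₀)) / (Pp * Ω₁))))
      = (Real.exp (-(a*t))) * (1 - Real.exp (-(b*t) + -k)) := by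
    have e2 : -(σ * (IC + N₀)) / (Pp * Ω₁) = -(b*t) + -k := by
      rw [hb, hk, ht]; field_simp; ring
    simp_rw [e2]
    rw [MeasureTheory.integral_mul_const]
    congr 1
    have : ∀ y : ℝ, Real.exp (-y / Ω₂) / Ω₂ = Ω₂⁻¹ * Real.exp (-(a*y)) := by
      intro y
      rw [ha, show -y / Ω₂ = -(Ω₂⁻¹*y) by ring]; ring
    simp_rw [this]
    rw [MeasureTheory.integral_const_mul, int_exp_Ioi a t ha0]
    rw [ha]; field_simp
  rw [hI1, hI2]
  -- now pure algebra with exponentials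
  have hrw1 : Real.exp (-(IC / (Ps * Ω₂)) - (IC + N₀) * σ / (Pp * Ω₁))
      = Real.exp (-(a*t)) * Real.exp (-(b*t)) * Real.exp (-k) := by
    rw [← Real.exp_add, ← Real.exp_add]
    congr 1
    rw [ha, hb, hk, ht]; field_simp; ring
  have hrw2 : Real.exp (-(N₀ * σ) / (Pp * Ω₁)) = Real.exp (-k) := by
    congr 1; rw [hk]; ring
  have hrw3 : Real.exp (-((a+b)*t)) = Real.exp (-(a*t)) * Real.exp (-(b*t)) := by
    rw [← Real.exp_add]; congr 1; ring
  have hrw4 : Real.exp (-(b*t) + -k) = Real.exp (-(b*t)) * Real.exp (-k) := Real.exp_add _ _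
  have hrw5 : Ps * Ω₂ * σ / (Pp * Ω₁) = b / a := by
    rw [ha, hb]; field_simp
  have hrw6 : Pp * Ω₁ / (Ps * Ω₂ * σ) = a / b := by
    rw [ha, hb]; field_simp
  rw [hrw1, hrw2, hrw3, hrw4, hrw5, hrw6]
  have hab : a + b ≠ 0 := by positivity
  have haΩ : Ω₂⁻¹ = a := rfl
  rw [haΩ]
  clear_value t a b k
  field_simp
  ring
end
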